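/- Let α > β > 1 and consider the Liénard equation u″ + h(u)u′ + k(u) = 0 with h(u) = 1 − β + 3βu² and k(u) = (α − β)u + βu³. Suppose u0 is a nonconstant periodic C² solution with minimal period T0 > 0, and suppose that every nonconstant periodic solution of the equation is a time translate of u0 (uniqueness of the limit cycle). Then u0(t + T0/2) = −u0(t) for all t ∈ ℝ. -/
import Mathlib


open Real

/-- Symmetry of the limit cycle of the Liénard equation
`u'' + (1 - β + 3βu²)u' + ((α-β)u + βu³) = 0` with `α > β > 1`:
if `u0` is a nonconstant periodic solution with minimal period `T0`, and every
nonconstant periodic solution is a time translate of `u0`, then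
`u0(t + T0/2) = -u0(t)`. -/
theorem limit_cycle_antiperiodic
    (α β : ℝ) (hβ : 1 < β) (hαβ : β < α)
    (u0 : ℝ → ℝ) (hu0C : ContDiff ℝ 2 u0)
    (hnc : ∃ a b : ℝ, u0 a ≠ u0 b)
    (T0 : ℝ) (hT0 : 0 < T0) (hper : Function.Periodic u0 T0)
    (hmin : ∀ T : ℝ, 0 < T → Function.Periodic u0 T → T0 ≤ T)
    (hode : ∀ t : ℝ,
      deriv (deriv u0) t + (1 - β + 3 * β * (u0 t) ^ 2) * deriv u0 t
        + ((α - β) * u0 t + β * (u0 t) ^ 3) = 0)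
    (huniq : ∀ v : ℝ → ℝ, ContDiff ℝ 2 v → (∃ a b : ℝ, v a ≠ v b) →
      (∃ T > (0:ℝ), Function.Periodic v T) →
      (∀ t : ℝ,
        deriv (deriv v) t + (1 - β + 3 * β * (v t) ^ 2) * deriv v t
          + ((α - β) * v t + β * (v t) ^ 3) = 0) →
      ∃ c : ℝ, ∀ t : ℝ, v t = u0 (t + c)) :
    ∀ t : ℝ, u0 (t + T0 / 2) = - u0 t := by
  -- consider v = -u0
  obtain ⟨c, hc⟩ := huniq (fun t => -u0 t) hu0C.neg
    (by obtain ⟨a, b, hab⟩ := hnc; exact ⟨a, b, by simpa using fun h => hab (neg_injective h)⟩)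
    ⟨T0, hT0, fun t => congrArg Neg.neg (hper t)⟩
    (by
      intro t
      have hd1 : deriv (fun t => -u0 t) = fun t => -deriv u0 t := by
        funext s; exact deriv.neg
      rw [hd1]
      have hd2 : deriv (fun t => -deriv u0 t) t = -deriv (deriv u0) t := deriv.neg
      rw [hd2]
      linear_combination -(hode t))
  -- u0 is not identically shifted trivially: c ≠ multiples
  have hc' : ∀ t, u0 (t + c) = -u0 t := fun t => (hc t).symm
  have hP : Function.Periodic u0 (2 * c) := by
    intro t
    have h1 := hc' t
    have h2 := hc' (t + c)
    have : t + 2 * c = t + c + c := by ring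
    rw [this, h2, h1, neg_neg]
  -- every period is an integer multiple of T0
  have key : ∀ P : ℝ, Function.Periodic u0 P → ∃ n : ℤ, P = n * T0 := by
    intro P hPer
    set n : ℤ := ⌊P / T0⌋ with hn
    have hr : Function.Periodic u0 (P - n * T0) := hPer.sub_period (hper.int_mul n)
    have h0 : 0 ≤ P - n * T0 := by
      have h := (le_div_iff₀ hT0).mp (Int.floor_le (P / T0))
      linarith
    have h1 : P - n * T0 < T0 := by
      have h := (div_lt_iff₀ hT0).mp (Int.lt_floor_add_one (P / T0))
      push_cast at h
      linarith
    rcases eq_or_lt_of_le h0 with h | h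
    · exact ⟨n, by linarith⟩
    · exact absurd (hmin _ h hr) (by linarith)
  obtain ⟨n, hn⟩ := key (2 * c) hP
  rcases Int.even_or_odd n with ⟨m, hm⟩ | ⟨m, hm⟩
  · -- even: c = m * T0, so -u0 t = u0 t, contradiction
    exfalso
    have hcm : c = m * T0 := by
      have : (n : ℝ) = 2 * m := by push_cast [hm]; ring
      rw [this] at hn; linarith
    obtain ⟨a, b, hab⟩ := hnc
    have hz : ∀ t, u0 t = 0 := by
      intro t
      have := hc' t
      rw [hcm] at this
      have h2 : u0 (t + (m : ℝ) * T0) = u0 t := (hper.int_mul m) t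
      rw [h2] at this
      linarith
    exact hab (by rw [hz a, hz b])
  · -- odd: c = m * T0 + T0/2
    intro t
    have hcm : c = m * T0 + T0 / 2 := by
      have : (n : ℝ) = 2 * m + 1 := by push_cast [hm]; ring
      rw [this] at hn; linarith
    have := hc' t
    rw [hcm] at this
    have h2 : u0 (t + ((m : ℝ) * T0 + T0 / 2)) = u0 (t + T0 / 2) := by
      have := (hper.int_mul m) (t + T0 / 2)
      rw [← this]; ring_nf
    rw [h2] at this
    linarith
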